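/- Let 0 < c < τ* and let δ*(y) = exp(2cy)/(exp(2cy)+1). Then the worst-case mean square regret of δ* over the parameter space [−c,c] is attained at the endpoints: sup_{τ∈[−c,c]} R(δ*,τ) = c² ρ(c). -/

import Mathlib

open Real MeasureTheory

/-- The standard normal density. -/
noncomputable def gaussPdf (x : ℝ) : ℝ :=
  (Real.sqrt (2 * Real.pi))⁻¹ * Real.exp (-(x ^ 2) / 2)

/-- ρ(a) = ∫ (1/(exp(2ay)+1))² φ(y−a) dy. -/
noncomputable def ρ (a : ℝ) : ℝ :=
  ∫ y : ℝ, (1 / (Real.exp (2 * a * y) + 1)) ^ 2 * gaussPdf (y - a)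

/-- Mean square regret of a rule δ at parameter τ in the one-dimensional Gaussian
problem with unit variance. -/
noncomputable def R (δ : ℝ → ℝ) (τ : ℝ) : ℝ :=
  τ ^ 2 * ∫ y : ℝ, ((if 0 ≤ τ then (1 : ℝ) else 0) - δ y) ^ 2 * gaussPdf (y - τ)

namespace Aux

lemma sqrt2pi_pos : 0 < Real.sqrt (2 * Real.pi) :=
  Real.sqrt_pos.2 (by positivity)

lemma gaussPdf_pos (x : ℝ) : 0 < gaussPdf x := by
  unfold gaussPdf; positivity

lemma gaussPdf_cont : Continuous gaussPdf := by
  unfold gaussPdf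
  exact continuous_const.mul (Real.continuous_exp.comp (by continuity))

lemma gaussPdf_even (x : ℝ) : gaussPdf (-x) = gaussPdf x := by
  unfold gaussPdf; ring_nf

lemma integrable_expsq (b μ : ℝ) (hb : 0 < b) :
    Integrable (fun x : ℝ => Real.exp (-(b * (x - μ) ^ 2))) := by
  have h := (integrable_exp_neg_mul_sq hb).comp_sub_right μ
  refine h.congr (Filter.Eventually.of_forall fun x => ?_)
  ring_nf

lemma integrable_gaussPdf_shift (t : ℝ) :
    Integrable (fun y : ℝ => gaussPdf (y - t)) := by
  have h := (integrable_expsq (1/2) t (by norm_num)).const_mul (Real.sqrt (2 * Real.pi))⁻¹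
  refine h.congr (Filter.Eventually.of_forall fun x => ?_)
  unfold gaussPdf; ring_nf

/-- bounded continuous times shifted gaussian is integrable -/
lemma integrable_bdd_mul_gauss {h : ℝ → ℝ} (hc : Continuous h) {C : ℝ}
    (hb : ∀ y, |h y| ≤ C) (t : ℝ) :
    Integrable (fun y : ℝ => h y * gaussPdf (y - t)) :=
  (integrable_gaussPdf_shift t).bdd_mul hc.aestronglyMeasurable
    (Filter.Eventually.of_forall fun y => by simpa [Real.norm_eq_abs] using hb y)

lemma integrable_bdd_mul_expsq {h : ℝ → ℝ} (hc : Continuous h) {C : ℝ}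
    (hb : ∀ y, |h y| ≤ C) (b μ : ℝ) (hbpos : 0 < b) :
    Integrable (fun y : ℝ => h y * Real.exp (-(b * (y - μ) ^ 2))) :=
  (integrable_expsq b μ hbpos).bdd_mul hc.aestronglyMeasurable
    (Filter.Eventually.of_forall fun y => by simpa [Real.norm_eq_abs] using hb y)

/-- continuous + midpoint concave implies concave (3-point version). -/
lemma concave_of_midpoint_of_continuous {f : ℝ → ℝ} (hf : Continuous f)
    (hm : ∀ x y, (f x + f y) / 2 ≤ f ((x + y) / 2)) :
    ∀ x y l : ℝ, 0 ≤ l → l ≤ 1 →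
      l * f x + (1 - l) * f y ≤ f (l * x + (1 - l) * y) := by
  intro x y l hl0 hl1
  set g : ℝ → ℝ := fun l => f (l * x + (1 - l) * y) - l * f x - (1 - l) * f y with hg
  have hgc : Continuous g := by
    apply Continuous.sub
    apply Continuous.sub
    · exact hf.comp (by continuity)
    · continuity
    · continuity
  have hg0 : g 0 = 0 := by simp [hg]
  have hg1 : g 1 = 0 := by simp [hg]
  have hgmid : ∀ a b : ℝ, 0 ≤ g a → 0 ≤ g b → 0 ≤ g ((a + b) / 2) := by
    intro a b ha hb
    have h2 := hm (a * x + (1 - a) * y) (b * x + (1 - b) * y)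
    have heq : (a * x + (1 - a) * y + (b * x + (1 - b) * y)) / 2
        = ((a + b) / 2) * x + (1 - (a + b) / 2) * y := by ring
    rw [heq] at h2
    simp only [hg] at ha hb ⊢
    nlinarith [h2]
  -- dyadic step
  have hdy : ∀ n : ℕ, ∀ k : ℕ, k ≤ 2 ^ n → 0 ≤ g ((k : ℝ) / 2 ^ n) := by
    intro n
    induction n with
    | zero =>
      intro k hk
      interval_cases k
      · simpa using hg0.ge
      · simpa using hg1.ge
    | succ n ih =>
      intro k hk
      rcases Nat.even_or_odd k with ⟨j, hj⟩ | ⟨j, hj⟩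
      · have hj2 : j ≤ 2 ^ n := by omega
        have := ih j hj2
        have heq : ((k : ℝ) / 2 ^ (n+1)) = (j : ℝ) / 2 ^ n := by
          subst hj; push_cast; ring
        rwa [heq]
      · have hj1 : j ≤ 2 ^ n := by omega
        have hj2 : j + 1 ≤ 2 ^ n := by omega
        have h1 := ih j hj1
        have h2 := ih (j + 1) hj2
        have heq : ((k : ℝ) / 2 ^ (n+1)) = (((j : ℝ) / 2 ^ n) + ((j + 1 : ℕ) : ℝ) / 2 ^ n) / 2 := by
          subst hj; push_cast; ring
        rw [heq]
        exact hgmid _ _ h1 h2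
  -- approximate l by dyadics
  have hseq : ∀ n : ℕ, 0 ≤ g ((⌊l * 2 ^ n⌋₊ : ℝ) / 2 ^ n) := by
    intro n
    apply hdy n
    have : l * 2 ^ n ≤ (2 ^ n : ℝ) := by
      nlinarith [pow_pos (by norm_num : (0:ℝ) < 2) n]
    calc ⌊l * 2 ^ n⌋₊ ≤ ⌊(2 ^ n : ℝ)⌋₊ := Nat.floor_le_floor this
    _ = 2 ^ n := by
        rw [show ((2:ℝ) ^ n) = ((2 ^ n : ℕ) : ℝ) by push_cast; ring, Nat.floor_natCast]
  have htend : Filter.Tendsto (fun n : ℕ => (⌊l * 2 ^ n⌋₊ : ℝ) / 2 ^ n)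
      Filter.atTop (nhds l) := by
    have h1 : ∀ n : ℕ, |(⌊l * 2 ^ n⌋₊ : ℝ) / 2 ^ n - l| ≤ (1 / 2) ^ n := by
      intro n
      have hp : (0:ℝ) < 2 ^ n := by positivity
      have hhalf : ((1:ℝ) / 2) ^ n * 2 ^ n = 1 := by
        rw [← mul_pow]; norm_num
      have hfl : (⌊l * 2 ^ n⌋₊ : ℝ) ≤ l * 2 ^ n := Nat.floor_le (by positivity)
      have hfu : l * 2 ^ n < (⌊l * 2 ^ n⌋₊ : ℝ) + 1 := Nat.lt_floor_add_one _
      rw [abs_le]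
      constructor
      · rw [le_sub_iff_add_le] at *
        rw [le_div_iff₀ hp]
        nlinarith
      · rw [sub_le_iff_le_add, div_le_iff₀ hp]
        nlinarith
    have h2 : Filter.Tendsto (fun n : ℕ => ((1:ℝ) / 2) ^ n) Filter.atTop (nhds 0) :=
      tendsto_pow_atTop_nhds_zero_of_lt_one (by norm_num) (by norm_num)
    have h3 : Filter.Tendsto
        (fun n : ℕ => (⌊l * 2 ^ n⌋₊ : ℝ) / 2 ^ n - l) Filter.atTop (nhds 0) :=
      squeeze_zero_norm h1 h2
    have := h3.add_const l
    simpa using this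
  have hgl : 0 ≤ g l :=
    le_of_tendsto_of_tendsto' tendsto_const_nhds
      ((hgc.continuousAt).tendsto.comp htend) hseq
  simp only [hg] at hgl
  linarith


lemma coshsum_two {x : ℝ} : 2 ≤ Real.exp x + Real.exp (-x) := by
  have h1 := Real.exp_pos x
  have h2 : Real.exp x * Real.exp (-x) = 1 := by
    rw [← Real.exp_add]; simp
  nlinarith [sq_nonneg (Real.exp x - 1)]

lemma coshsum_mono {p q : ℝ} (h : p ^ 2 ≤ q ^ 2) :
    Real.exp p + Real.exp (-p) ≤ Real.exp q + Real.exp (-q) := by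
  have h1 : |p| ≤ |q| := by
    have := Real.sqrt_le_sqrt h
    rwa [Real.sqrt_sq_eq_abs, Real.sqrt_sq_eq_abs] at this
  have e1 : Real.exp p + Real.exp (-p) = Real.exp |p| + Real.exp (-|p|) := by
    rcases abs_cases p with ⟨hp, _⟩ | ⟨hp, _⟩ <;> rw [hp] <;> simp [add_comm]
  have e2 : Real.exp q + Real.exp (-q) = Real.exp |q| + Real.exp (-|q|) := by
    rcases abs_cases q with ⟨hq, _⟩ | ⟨hq, _⟩ <;> rw [hq] <;> simp [add_comm]
  rw [e1, e2, Real.exp_neg, Real.exp_neg]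
  set A := Real.exp |p| with hA
  set B := Real.exp |q| with hB
  have hA1 : 1 ≤ A := Real.one_le_exp (abs_nonneg p)
  have hAB : A ≤ B := Real.exp_le_exp.2 h1
  have hA0 : 0 < A := lt_of_lt_of_le one_pos hA1
  have hB0 : 0 < B := lt_of_lt_of_le hA0 hAB
  have key : A⁻¹ - B⁻¹ = (B - A) / (A * B) := by field_simp
  have h2 : (B - A) / (A * B) ≤ B - A := by
    apply div_le_self (by linarith) (by nlinarith)
  linarith

/-- The key rearrangement inequality: integrating an even, unimodal (in the
relevant sense) function against a shifted Gaussian is maximal at zero shift. -/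
lemma shift_core (c C₀ γ : ℝ) (hC₀ : 0 ≤ C₀) :
    (∫ v : ℝ, ((C₀ + (Real.exp (2*c*v) + Real.exp (-(2*c*v)))) ^ 2)⁻¹
        * Real.exp (-((v - γ) ^ 2)))
      ≤ ∫ v : ℝ, ((C₀ + (Real.exp (2*c*v) + Real.exp (-(2*c*v)))) ^ 2)⁻¹
        * Real.exp (-(v ^ 2)) := by
  set ψ : ℝ → ℝ := fun v => ((C₀ + (Real.exp (2*c*v) + Real.exp (-(2*c*v)))) ^ 2)⁻¹ with hψdef
  set E : ℝ → ℝ := fun v => Real.exp (-(v ^ 2)) with hEdef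
  have hDpos : ∀ v : ℝ, 0 < C₀ + (Real.exp (2*c*v) + Real.exp (-(2*c*v))) := by
    intro v; have := Real.exp_pos (2*c*v); have := Real.exp_pos (-(2*c*v)); linarith
  have hψpos : ∀ v, 0 < ψ v := by
    intro v; simp only [hψdef]; positivity
  have hψbd : ∀ v, |ψ v| ≤ 1/4 := by
    intro v
    have h2 : 2 ≤ C₀ + (Real.exp (2*c*v) + Real.exp (-(2*c*v))) := by
      have := coshsum_two (x := 2*c*v); linarith
    rw [abs_of_pos (hψpos v)]
    simp only [hψdef]
    rw [show (1:ℝ)/4 = ((2:ℝ)^2)⁻¹ by norm_num]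
    apply inv_anti₀ (by norm_num)
    apply pow_le_pow_left₀ (by norm_num) h2
  have hψcont : Continuous ψ := by
    apply Continuous.inv₀
    · continuity
    · intro v; exact (pow_pos (hDpos v) 2).ne'
  have hψeven : ∀ v, ψ (-v) = ψ v := by
    intro v
    simp only [hψdef]
    rw [show 2*c*(-v) = -(2*c*v) by ring, neg_neg, add_comm (Real.exp (-(2*c*v)))]
  have hψmono : ∀ u v : ℝ, u ^ 2 ≤ v ^ 2 → ψ v ≤ ψ u := by
    intro u v huv
    simp only [hψdef]
    apply inv_anti₀ (pow_pos (hDpos u) 2)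
    apply pow_le_pow_left₀ (hDpos u).le
    have : (2*c*u) ^ 2 ≤ (2*c*v) ^ 2 := by nlinarith [sq_nonneg (2*c)]
    have := coshsum_mono this
    linarith
  -- integrability of all four pieces
  have hint : ∀ δ θ : ℝ, Integrable (fun v : ℝ => ψ (v - δ) * E (v - θ)) := by
    intro δ θ
    have h := Aux.integrable_bdd_mul_expsq (h := fun v => ψ (v - δ))
      (hψcont.comp (by continuity)) (fun y => hψbd (y - δ)) 1 θ one_pos
    refine h.congr (Filter.Eventually.of_forall fun v => ?_)
    simp only [hEdef]; ring_nf
  have hint00 : Integrable (fun v : ℝ => ψ v * E v) := by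
    have := hint 0 0; simpa using this
  have hint0γ : Integrable (fun v : ℝ => ψ v * E (v - γ)) := by
    have := hint 0 γ; simpa using this
  have hintγ0 : Integrable (fun v : ℝ => ψ (v - γ) * E v) := by
    have := hint γ 0; simpa using this
  have hintγγ : Integrable (fun v : ℝ => ψ (v - γ) * E (v - γ)) := by
    have := hint γ γ; simpa using this
  -- translation and reflection identities
  have I1 : ∫ v : ℝ, ψ (v - γ) * E (v - γ) = ∫ v : ℝ, ψ v * E v :=
    integral_sub_right_eq_self (μ := (volume : Measure ℝ)) (fun v => ψ v * E v) γ
  have I2 : ∫ v : ℝ, ψ (v - γ) * E v = ∫ v : ℝ, ψ v * E (v - γ) := by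
    have A : ∫ v : ℝ, ψ (v - γ) * E v = ∫ v : ℝ, ψ v * E (v + γ) := by
      have h := integral_sub_right_eq_self (μ := (volume : Measure ℝ))
        (fun v : ℝ => ψ v * E (v + γ)) γ
      simp only [sub_add_cancel] at h
      exact h
    have B : ∫ v : ℝ, ψ v * E (v + γ) = ∫ v : ℝ, ψ v * E (v - γ) := by
      have h := integral_neg_eq_self (fun v : ℝ => ψ v * E (v - γ)) (volume : Measure ℝ)
      rw [← h]
      congr 1; funext v
      rw [hψeven v]
      have : E (-v - γ) = E (v + γ) := by
        simp only [hEdef]; ring_nf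
      rw [this]
    rw [A, B]
  -- expansion of the product
  have expand : (∫ v : ℝ, (ψ v - ψ (v - γ)) * (E v - E (v - γ)))
      = (∫ v : ℝ, ψ v * E v) - (∫ v : ℝ, ψ v * E (v - γ))
        - (∫ v : ℝ, ψ (v - γ) * E v) + (∫ v : ℝ, ψ (v - γ) * E (v - γ)) := by
    have heq : (fun v : ℝ => (ψ v - ψ (v - γ)) * (E v - E (v - γ)))
        = fun v => (ψ v * E v - ψ v * E (v - γ)) - (ψ (v - γ) * E v - ψ (v - γ) * E (v - γ)) := by
      funext v; ring
    have E12 : Integrable (fun v : ℝ => ψ v * E v - ψ v * E (v - γ)) :=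
      hint00.sub hint0γ
    have E34 : Integrable (fun v : ℝ => ψ (v - γ) * E v - ψ (v - γ) * E (v - γ)) :=
      hintγ0.sub hintγγ
    have E1 : ∫ v : ℝ, (ψ v * E v - ψ v * E (v - γ))
        = (∫ v : ℝ, ψ v * E v) - ∫ v : ℝ, ψ v * E (v - γ) := integral_sub hint00 hint0γ
    have E2 : ∫ v : ℝ, (ψ (v - γ) * E v - ψ (v - γ) * E (v - γ))
        = (∫ v : ℝ, ψ (v - γ) * E v) - ∫ v : ℝ, ψ (v - γ) * E (v - γ) :=
      integral_sub hintγ0 hintγγ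
    have E0 : ∫ v : ℝ, ((ψ v * E v - ψ v * E (v - γ)) - (ψ (v - γ) * E v - ψ (v - γ) * E (v - γ)))
        = (∫ v : ℝ, (ψ v * E v - ψ v * E (v - γ)))
          - ∫ v : ℝ, (ψ (v - γ) * E v - ψ (v - γ) * E (v - γ)) := integral_sub E12 E34
    rw [heq, E0, E1, E2]
    ring
  have hpt : ∀ v : ℝ, 0 ≤ (ψ v - ψ (v - γ)) * (E v - E (v - γ)) := by
    intro v
    have hE : ∀ a b : ℝ, a ^ 2 ≤ b ^ 2 → E b ≤ E a := by
      intro a b hab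
      simp only [hEdef]
      exact Real.exp_le_exp.2 (by linarith)
    rcases le_total (v ^ 2) ((v - γ) ^ 2) with hle | hle
    · exact mul_nonneg (by linarith [hψmono v (v - γ) hle]) (by linarith [hE v (v - γ) hle])
    · have h1 : ψ v - ψ (v - γ) ≤ 0 := by linarith [hψmono (v - γ) v hle]
      have h2 : E v - E (v - γ) ≤ 0 := by linarith [hE (v - γ) v hle]
      nlinarith
  have hpos : 0 ≤ ∫ v : ℝ, (ψ v - ψ (v - γ)) * (E v - E (v - γ)) :=
    integral_nonneg hpt
  rw [expand, I1, I2] at hpos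
  linarith
noncomputable def K (c y : ℝ) : ℝ := ((Real.exp (c * y) + Real.exp (-(c * y))) ^ 2)⁻¹

noncomputable def w (c s : ℝ) : ℝ := ∫ y : ℝ, K c y * gaussPdf (y - s)

lemma K_pos (c y : ℝ) : 0 < K c y := by
  unfold K; positivity

lemma K_bd (c y : ℝ) : |K c y| ≤ 1 / 4 := by
  rw [abs_of_pos (K_pos c y)]
  unfold K
  rw [show (1:ℝ)/4 = ((2:ℝ) ^ 2)⁻¹ by norm_num]
  apply inv_anti₀ (by norm_num)
  apply pow_le_pow_left₀ (by norm_num) (coshsum_two (x := c * y))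

lemma K_cont (c : ℝ) : Continuous (K c) := by
  unfold K
  apply Continuous.inv₀
  · continuity
  · intro y
    have h1 := Real.exp_pos (c * y); have h2 := Real.exp_pos (-(c * y))
    positivity

lemma integrable_K_gauss (c t : ℝ) : Integrable (fun y : ℝ => K c y * gaussPdf (y - t)) :=
  integrable_bdd_mul_gauss (K_cont c) (K_bd c) t

lemma w_pos (c s : ℝ) : 0 < w c s := by
  unfold w
  rw [integral_pos_iff_support_of_nonneg
    (fun y => (mul_pos (K_pos c y) (gaussPdf_pos _)).le) (integrable_K_gauss c s)]
  have h : Function.support (fun y : ℝ => K c y * gaussPdf (y - s)) = Set.univ := by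
    ext y
    simp only [Function.mem_support, Set.mem_univ, iff_true, ne_eq, mul_eq_zero, not_or]
    exact ⟨(K_pos c y).ne', (gaussPdf_pos _).ne'⟩
  rw [h]
  simp

lemma w_cont (c : ℝ) : Continuous (w c) := by
  rw [continuous_iff_continuousAt]
  intro s₀
  unfold w
  apply continuousAt_of_dominated (bound :=
    fun y => (1/4) * ((Real.sqrt (2 * Real.pi))⁻¹ * Real.exp (1/2) * Real.exp (-((y - s₀) ^ 2 / 4))))
  · exact Filter.Eventually.of_forall fun s =>
      ((K_cont c).mul (gaussPdf_cont.comp (continuous_id.sub continuous_const))).aestronglyMeasurable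
  · filter_upwards [Metric.ball_mem_nhds s₀ one_pos] with s hs
    apply Filter.Eventually.of_forall
    intro y
    have hd : |s - s₀| < 1 := by
      rw [Metric.mem_ball, Real.dist_eq] at hs; exact hs
    have hd2 : (s - s₀) ^ 2 ≤ 1 := by
      nlinarith [abs_nonneg (s - s₀), sq_abs (s - s₀)]
    rw [Real.norm_eq_abs, abs_of_pos (mul_pos (K_pos c y) (gaussPdf_pos _))]
    have h1 : gaussPdf (y - s) ≤ (Real.sqrt (2 * Real.pi))⁻¹ * Real.exp (1/2)
        * Real.exp (-((y - s₀) ^ 2 / 4)) := by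
      unfold gaussPdf
      rw [mul_assoc, ← Real.exp_add]
      apply mul_le_mul_of_nonneg_left _ (by positivity)
      apply Real.exp_le_exp.2
      nlinarith [sq_nonneg ((y - s₀) / 2 - (s - s₀))]
    calc K c y * gaussPdf (y - s)
        ≤ (1/4) * gaussPdf (y - s) := by
          apply mul_le_mul_of_nonneg_right _ (gaussPdf_pos _).le
          have h2 := K_bd c y; rw [abs_of_pos (K_pos c y)] at h2; exact h2
      _ ≤ (1/4) * ((Real.sqrt (2 * Real.pi))⁻¹ * Real.exp (1/2)
            * Real.exp (-((y - s₀) ^ 2 / 4))) := by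
          apply mul_le_mul_of_nonneg_left h1 (by norm_num)
  · have h := ((integrable_expsq (1/4) s₀ (by norm_num)).const_mul
      ((Real.sqrt (2 * Real.pi))⁻¹ * Real.exp (1/2))).const_mul (1/4)
    refine h.congr (Filter.Eventually.of_forall fun y => ?_)
    ring_nf
  · apply Filter.Eventually.of_forall
    intro y
    exact (continuous_const.mul (gaussPdf_cont.comp (continuous_const.sub continuous_id))).continuousAt

lemma K_pair (c μ v : ℝ) :
    K c (μ + v) * K c (μ - v)
      = (((Real.exp (2*c*μ) + Real.exp (-(2*c*μ)))
          + (Real.exp (2*c*v) + Real.exp (-(2*c*v)))) ^ 2)⁻¹ := by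
  unfold K
  rw [← mul_inv, ← mul_pow]
  congr 2
  simp only [add_mul, mul_add, ← Real.exp_add]
  rw [show c * μ + c * v + c * (μ - v) = 2*c*μ by ring,
    show -(c * μ + c * v) + c * (μ - v) = -(2*c*v) by ring,
    show c * μ + c * v + -(c * (μ - v)) = 2*c*v by ring,
    show -(c * μ + c * v) + -(c * (μ - v)) = -(2*c*μ) by ring]
  ring

/-- inner representation of the fibered integral -/
lemma inner_rep (c a b t : ℝ) :
    (∫ x : ℝ, K c x * gaussPdf (x - a) * (K c (t - x) * gaussPdf ((t - x) - b)))
      = (2 * Real.pi)⁻¹ * Real.exp (-((t - a - b) ^ 2 / 4))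
        * ∫ v : ℝ, (((Real.exp (2*c*(t/2)) + Real.exp (-(2*c*(t/2))))
            + (Real.exp (2*c*v) + Real.exp (-(2*c*v)))) ^ 2)⁻¹
            * Real.exp (-((v - (a - b)/2) ^ 2)) := by
  have step1 : ∀ x : ℝ, K c x * gaussPdf (x - a) * (K c (t - x) * gaussPdf ((t - x) - b))
      = (2 * Real.pi)⁻¹ * Real.exp (-((t - a - b) ^ 2 / 4))
        * (K c x * K c (t - x) * Real.exp (-((x - t/2 - (a - b)/2) ^ 2))) := by
    intro x
    unfold gaussPdf
    have hsq : (Real.sqrt (2 * Real.pi))⁻¹ * (Real.sqrt (2 * Real.pi))⁻¹ = (2 * Real.pi)⁻¹ := by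
      rw [← mul_inv, Real.mul_self_sqrt (by positivity)]
    have hexp : Real.exp (-((x - a) ^ 2) / 2) * Real.exp (-((t - x - b) ^ 2) / 2)
        = Real.exp (-((t - a - b) ^ 2 / 4)) * Real.exp (-((x - t/2 - (a - b)/2) ^ 2)) := by
      rw [← Real.exp_add, ← Real.exp_add]
      congr 1
      ring
    calc K c x * ((Real.sqrt (2 * Real.pi))⁻¹ * Real.exp (-((x - a) ^ 2) / 2))
          * (K c (t - x) * ((Real.sqrt (2 * Real.pi))⁻¹ * Real.exp (-((t - x - b) ^ 2) / 2)))
        = ((Real.sqrt (2 * Real.pi))⁻¹ * (Real.sqrt (2 * Real.pi))⁻¹)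
          * (Real.exp (-((x - a) ^ 2) / 2) * Real.exp (-((t - x - b) ^ 2) / 2))
          * (K c x * K c (t - x)) := by ring
      _ = (2 * Real.pi)⁻¹ * Real.exp (-((t - a - b) ^ 2 / 4))
          * (K c x * K c (t - x) * Real.exp (-((x - t/2 - (a - b)/2) ^ 2))) := by
          rw [hsq, hexp]; ring
  rw [integral_congr_ae (Filter.Eventually.of_forall step1), integral_const_mul]
  congr 1
  rw [← integral_add_right_eq_self (μ := (volume : Measure ℝ))
    (fun x : ℝ => K c x * K c (t - x) * Real.exp (-((x - t/2 - (a - b)/2) ^ 2))) (t/2)]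
  apply integral_congr_ae
  apply Filter.Eventually.of_forall
  intro v
  have h1 : t - (v + t/2) = t/2 - v := by ring
  have h2 : v + t/2 - t/2 - (a-b)/2 = v - (a-b)/2 := by ring
  simp only [h1, h2]
  rw [add_comm v (t/2), K_pair c (t/2) v]
lemma double_rep (c a b : ℝ) :
    (w c a * w c b = ∫ t : ℝ, ∫ x : ℝ,
        K c x * gaussPdf (x - a) * (K c (t - x) * gaussPdf ((t - x) - b)))
    ∧ Integrable (fun t : ℝ => ∫ x : ℝ,
        K c x * gaussPdf (x - a) * (K c (t - x) * gaussPdf ((t - x) - b))) := by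
  have hfa := integrable_K_gauss c a
  have hfb := integrable_K_gauss c b
  set H : ℝ × ℝ → ℝ := fun z =>
    K c z.1 * gaussPdf (z.1 - a) * (K c (z.2 - z.1) * gaussPdf ((z.2 - z.1) - b)) with hHdef
  have hMP : MeasurePreserving (fun z : ℝ × ℝ => (z.1, z.1 + z.2))
      ((volume : Measure ℝ).prod volume) ((volume : Measure ℝ).prod volume) :=
    measurePreserving_prod_add volume volume
  have hEmb : MeasurableEmbedding (fun z : ℝ × ℝ => (z.1, z.1 + z.2)) :=
    (MeasurableEquiv.shearAddRight ℝ).measurableEmbedding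
  have hcomp : (H ∘ fun z : ℝ × ℝ => (z.1, z.1 + z.2))
      = fun z : ℝ × ℝ => (K c z.1 * gaussPdf (z.1 - a)) * (K c z.2 * gaussPdf (z.2 - b)) := by
    funext z
    simp only [Function.comp, hHdef, add_sub_cancel_left]
  have hH : Integrable H ((volume : Measure ℝ).prod volume) := by
    apply (hMP.integrable_comp_emb hEmb).1
    rw [hcomp]
    exact hfa.mul_prod hfb
  constructor
  · calc w c a * w c b
        = ∫ z : ℝ × ℝ, (K c z.1 * gaussPdf (z.1 - a)) * (K c z.2 * gaussPdf (z.2 - b))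
            ∂((volume : Measure ℝ).prod volume) := (integral_prod_mul _ _).symm
      _ = ∫ z : ℝ × ℝ, H ((fun z : ℝ × ℝ => (z.1, z.1 + z.2)) z)
            ∂((volume : Measure ℝ).prod volume) := by rw [← hcomp]; rfl
      _ = ∫ z : ℝ × ℝ, H z ∂((volume : Measure ℝ).prod volume) :=
            hMP.integral_comp hEmb H
      _ = ∫ t : ℝ, ∫ x : ℝ, H (x, t) := integral_prod_symm H hH
  · have h := (hH.swap).integral_prod_left
    exact h
lemma w_midpoint (c a b : ℝ) : w c a * w c b ≤ w c ((a + b)/2) ^ 2 := by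
  obtain ⟨repab, intab⟩ := double_rep c a b
  obtain ⟨repmm, intmm⟩ := double_rep c ((a + b)/2) ((a + b)/2)
  rw [sq, repab, repmm]
  apply integral_mono intab intmm
  intro t
  simp only []
  rw [inner_rep c a b t, inner_rep c ((a + b)/2) ((a + b)/2) t]
  have e1 : t - (a + b)/2 - (a + b)/2 = t - a - b := by ring
  have e2 : ((a + b)/2 - (a + b)/2)/2 = 0 := by ring
  rw [e1, e2]
  apply mul_le_mul_of_nonneg_left _ (by positivity)
  have h := shift_core c (Real.exp (2*c*(t/2)) + Real.exp (-(2*c*(t/2)))) ((a - b)/2)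
    (by positivity)
  simpa using h
noncomputable def gg (c t : ℝ) : ℝ :=
  ∫ y : ℝ, ((Real.exp (2*c*y) + 1)⁻¹) ^ 2 * gaussPdf (y - t)

lemma pfun_pos (c y : ℝ) : 0 < ((Real.exp (2*c*y) + 1)⁻¹) ^ 2 := by positivity

lemma pfun_bd (c : ℝ) : ∀ y, |((Real.exp (2*c*y) + 1)⁻¹) ^ 2| ≤ 1 := by
  intro y
  rw [abs_of_pos (pfun_pos c y)]
  have h1 : 1 ≤ Real.exp (2*c*y) + 1 := by linarith [Real.exp_pos (2*c*y)]
  have h2 : (Real.exp (2*c*y) + 1)⁻¹ ≤ 1 := by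
    rw [← one_div]
    exact div_le_one_of_le₀ h1 (by positivity)
  calc ((Real.exp (2*c*y) + 1)⁻¹) ^ 2 ≤ 1 ^ 2 :=
        pow_le_pow_left₀ (by positivity) h2 2
    _ = 1 := one_pow 2

lemma pfun_cont (c : ℝ) : Continuous (fun y : ℝ => ((Real.exp (2*c*y) + 1)⁻¹) ^ 2) := by
  apply Continuous.pow
  apply Continuous.inv₀
  · continuity
  · intro y; positivity

lemma integrable_pfun_gauss (c t : ℝ) :
    Integrable (fun y : ℝ => ((Real.exp (2*c*y) + 1)⁻¹) ^ 2 * gaussPdf (y - t)) :=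
  integrable_bdd_mul_gauss (pfun_cont c) (pfun_bd c) t

lemma gg_pos (c t : ℝ) : 0 < gg c t := by
  unfold gg
  rw [integral_pos_iff_support_of_nonneg
    (fun y => (mul_pos (pfun_pos c y) (gaussPdf_pos _)).le) (integrable_pfun_gauss c t)]
  have h : Function.support
      (fun y : ℝ => ((Real.exp (2*c*y) + 1)⁻¹) ^ 2 * gaussPdf (y - t)) = Set.univ := by
    ext y
    simp only [Function.mem_support, Set.mem_univ, iff_true, ne_eq, mul_eq_zero, not_or]
    exact ⟨(pfun_pos c y).ne', (gaussPdf_pos _).ne'⟩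
  rw [h]
  simp

lemma rho_eq (a : ℝ) : ρ a = gg a a := by
  unfold ρ gg
  congr 1
  funext y
  rw [one_div]

lemma gauss_shift (a y : ℝ) : gaussPdf (y - a) = Real.exp (2*a*y) * gaussPdf (y + a) := by
  unfold gaussPdf
  rw [mul_left_comm, ← Real.exp_add]
  congr 1
  ring

lemma bracket_ineq {s u P : ℝ} (hs : 0 < s) (hu : 0 < u) (hP : 0 ≤ P) :
    ((s+1)⁻¹) ^ 2 * (s*P) + ((s⁻¹+1)⁻¹) ^ 2 * P
      ≤ ((u+1)⁻¹) ^ 2 * (s*P) + ((u⁻¹+1)⁻¹) ^ 2 * P := by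
  have h1 : ((s+1)⁻¹) ^ 2 * s + ((s⁻¹+1)⁻¹) ^ 2 = s/(1+s) := by
    rw [show s⁻¹ + 1 = (1 + s)/s by field_simp]
    field_simp
    ring
  have h2 : ((u+1)⁻¹) ^ 2 * s + ((u⁻¹+1)⁻¹) ^ 2 = (s + u^2)/(1+u)^2 := by
    rw [show u⁻¹ + 1 = (1 + u)/u by field_simp]
    field_simp
    ring
  have key : s/(1+s) ≤ (s + u^2)/(1+u)^2 := by
    rw [div_le_div_iff₀ (by positivity) (by positivity)]
    nlinarith [sq_nonneg (u - s)]
  calc ((s+1)⁻¹) ^ 2 * (s*P) + ((s⁻¹+1)⁻¹) ^ 2 * P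
      = (((s+1)⁻¹) ^ 2 * s + ((s⁻¹+1)⁻¹) ^ 2) * P := by ring
    _ ≤ ((s + u^2)/(1+u)^2) * P := by
        rw [h1]; exact mul_le_mul_of_nonneg_right key hP
    _ = (((u+1)⁻¹) ^ 2 * s + ((u⁻¹+1)⁻¹) ^ 2) * P := by rw [h2]
    _ = ((u+1)⁻¹) ^ 2 * (s*P) + ((u⁻¹+1)⁻¹) ^ 2 * P := by ring

lemma sym_pt (c a y : ℝ) :
    ((Real.exp (2*a*y) + 1)⁻¹) ^ 2 * gaussPdf (y - a)
      + ((Real.exp (2*a*(-y)) + 1)⁻¹) ^ 2 * gaussPdf (-y - a)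
    ≤ ((Real.exp (2*c*y) + 1)⁻¹) ^ 2 * gaussPdf (y - a)
      + ((Real.exp (2*c*(-y)) + 1)⁻¹) ^ 2 * gaussPdf (-y - a) := by
  have hsym : gaussPdf (-y - a) = gaussPdf (y + a) := by
    rw [show -y - a = -(y + a) by ring, gaussPdf_even]
  have hia : Real.exp (2*a*(-y)) = (Real.exp (2*a*y))⁻¹ := by
    rw [← Real.exp_neg]; congr 1; ring
  have hic : Real.exp (2*c*(-y)) = (Real.exp (2*c*y))⁻¹ := by
    rw [← Real.exp_neg]; congr 1; ring
  rw [hsym, hia, hic, gauss_shift a y]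
  exact bracket_ineq (Real.exp_pos _) (Real.exp_pos _) (gaussPdf_pos _).le

lemma rho_le_gg (c a : ℝ) : ρ a ≤ gg c a := by
  rw [rho_eq]
  unfold gg
  set f : ℝ → ℝ := fun y => ((Real.exp (2*a*y) + 1)⁻¹) ^ 2 * gaussPdf (y - a) with hf
  set h : ℝ → ℝ := fun y => ((Real.exp (2*c*y) + 1)⁻¹) ^ 2 * gaussPdf (y - a) with hh
  have intf : Integrable f := integrable_pfun_gauss a a
  have inth : Integrable h := integrable_pfun_gauss c a
  have intfn : Integrable (fun y => f (-y)) := intf.comp_neg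
  have inthn : Integrable (fun y => h (-y)) := inth.comp_neg
  have ef : ∫ y : ℝ, f (-y) = ∫ y : ℝ, f y := integral_neg_eq_self f volume
  have eh : ∫ y : ℝ, h (-y) = ∫ y : ℝ, h y := integral_neg_eq_self h volume
  have hmono : (∫ y : ℝ, (f y + f (-y))) ≤ ∫ y : ℝ, (h y + h (-y)) := by
    apply integral_mono (intf.add intfn) (inth.add inthn)
    intro y
    simp only [hf, hh]
    exact sym_pt c a y
  rw [integral_add intf intfn, integral_add inth inthn, ef, eh] at hmono
  linarith

lemma gg_tilt (c t : ℝ) : gg c t = Real.exp (2*c^2 - 2*c*t) * w c (t - 2*c) := by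
  unfold gg w
  rw [← integral_const_mul]
  apply integral_congr_ae
  apply Filter.Eventually.of_forall
  intro y
  have hKp : ((Real.exp (2*c*y) + 1)⁻¹) ^ 2 = Real.exp (-(2*c*y)) * K c y := by
    unfold K
    have hfact : Real.exp (2*c*y) + 1
        = Real.exp (c*y) * (Real.exp (c*y) + Real.exp (-(c*y))) := by
      rw [mul_add, ← Real.exp_add, ← Real.exp_add,
        show c*y + c*y = 2*c*y by ring, show c*y + -(c*y) = (0:ℝ) by ring, Real.exp_zero]
    rw [hfact, mul_inv, mul_pow, inv_pow, inv_pow, pow_two (Real.exp (c*y)),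
      ← Real.exp_add, show c*y + c*y = 2*c*y by ring, ← Real.exp_neg]
  have hsh : Real.exp (-(2*c*y)) * gaussPdf (y - t)
      = Real.exp (2*c^2 - 2*c*t) * gaussPdf (y - (t - 2*c)) := by
    unfold gaussPdf
    rw [mul_left_comm, mul_left_comm (Real.exp (2*c^2 - 2*c*t))]
    congr 1
    rw [← Real.exp_add, ← Real.exp_add]
    congr 1
    ring
  calc ((Real.exp (2*c*y) + 1)⁻¹) ^ 2 * gaussPdf (y - t)
      = K c y * (Real.exp (-(2*c*y)) * gaussPdf (y - t)) := by rw [hKp]; ring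
    _ = K c y * (Real.exp (2*c^2 - 2*c*t) * gaussPdf (y - (t - 2*c))) := by rw [hsh]
    _ = Real.exp (2*c^2 - 2*c*t) * (K c y * gaussPdf (y - (t - 2*c))) := by ring
lemma R_eq (c : ℝ) (δstar : ℝ → ℝ)
    (hδ : ∀ y, δstar y = Real.exp (2 * c * y) / (Real.exp (2 * c * y) + 1)) (τ : ℝ) :
    R δstar τ = τ ^ 2 * gg c |τ| := by
  unfold R gg
  congr 1
  rcases le_or_gt 0 τ with h | h
  · rw [abs_of_nonneg h]
    apply integral_congr_ae
    apply Filter.Eventually.of_forall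
    intro y
    dsimp only
    rw [if_pos h]
    have hδy : (1 : ℝ) - δstar y = (Real.exp (2*c*y) + 1)⁻¹ := by
      rw [hδ y]
      have h0 : Real.exp (2*c*y) + 1 ≠ 0 := by positivity
      field_simp
      ring
    rw [hδy]
  · rw [abs_of_neg h]
    have hδ2 : ∀ y : ℝ, ((if 0 ≤ τ then (1:ℝ) else 0) - δstar y) ^ 2
        = ((Real.exp (2*c*(-y)) + 1)⁻¹) ^ 2 := by
      intro y
      rw [if_neg (not_le.2 h), hδ y]
      have h0 : Real.exp (2*c*y) + 1 ≠ 0 := by positivity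
      have h1 : Real.exp (2*c*(-y)) = (Real.exp (2*c*y))⁻¹ := by
        rw [← Real.exp_neg]; congr 1; ring
      rw [h1, zero_sub, neg_sq]
      congr 1
      have h2 : (Real.exp (2*c*y))⁻¹ + 1 = (1 + Real.exp (2*c*y)) / Real.exp (2*c*y) := by
        field_simp
      rw [h2]
      field_simp
      ring
    set F : ℝ → ℝ := fun y => ((Real.exp (2*c*y) + 1)⁻¹) ^ 2 * gaussPdf (-y - τ) with hF
    calc ∫ y : ℝ, ((if 0 ≤ τ then (1:ℝ) else 0) - δstar y) ^ 2 * gaussPdf (y - τ)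
        = ∫ y : ℝ, F (-y) := by
          apply integral_congr_ae
          apply Filter.Eventually.of_forall
          intro y
          dsimp only
          rw [hδ2 y]
          simp only [hF, neg_neg]
      _ = ∫ y : ℝ, F y := integral_neg_eq_self F volume
      _ = ∫ y : ℝ, ((Real.exp (2*c*y) + 1)⁻¹) ^ 2 * gaussPdf (y - -τ) := by
          apply integral_congr_ae
          apply Filter.Eventually.of_forall
          intro y
          simp only [hF]
          rw [show -y - τ = -(y - -τ) by ring, gaussPdf_even]

lemma H_le (c τstar : ℝ) (hc0 : 0 < c) (hct : c < τstar)
    (hkey : c ^ 2 * gg c c ≤ τstar ^ 2 * gg c τstar)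
    (t : ℝ) (ht0 : 0 < t) (htc : t < c) :
    t ^ 2 * gg c t ≤ c ^ 2 * gg c c := by
  have hτ0 : 0 < τstar := lt_trans hc0 hct
  have hHt : 0 < t ^ 2 * gg c t := mul_pos (pow_pos ht0 2) (gg_pos c t)
  have hHc : 0 < c ^ 2 * gg c c := mul_pos (pow_pos hc0 2) (gg_pos c c)
  have hHτ : 0 < τstar ^ 2 * gg c τstar := mul_pos (pow_pos hτ0 2) (gg_pos c τstar)
  have logH : ∀ s : ℝ, 0 < s → Real.log (s ^ 2 * gg c s)
      = 2 * Real.log s + (2*c^2 - 2*c*s) + Real.log (w c (s - 2*c)) := by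
    intro s hs
    rw [gg_tilt, Real.log_mul (pow_pos hs 2).ne'
        (mul_pos (Real.exp_pos _) (w_pos c _)).ne',
      Real.log_mul (Real.exp_ne_zero _) (w_pos c _).ne', Real.log_exp, Real.log_pow]
    push_cast
    ring
  have hconc := concave_of_midpoint_of_continuous
    (f := fun s => Real.log (w c s))
    ((w_cont c).log (fun s => (w_pos c s).ne'))
    (fun x y => by
      have h := w_midpoint c x y
      have h1 := (Real.log_le_log_iff (mul_pos (w_pos c x) (w_pos c y))
        (pow_pos (w_pos c _) 2)).2 h
      rw [Real.log_mul (w_pos c x).ne' (w_pos c y).ne', Real.log_pow] at h1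
      push_cast at h1
      linarith)
  set l := (τstar - c)/(τstar - t) with hl
  have hne : τstar - t ≠ 0 := by linarith
  have hl0 : 0 < l := div_pos (by linarith) (by linarith)
  have hl1 : l < 1 := (div_lt_one (by linarith)).2 (by linarith)
  have hcomb : c = l * t + (1 - l) * τstar := by
    rw [hl]
    field_simp
    ring
  have hg1 : l * Real.log t + (1 - l) * Real.log τstar ≤ Real.log c := by
    have hgm := Real.geom_mean_le_arith_mean2_weighted (w₁ := l) (w₂ := 1 - l)
      (p₁ := t) (p₂ := τstar) hl0.le (by linarith) ht0.le hτ0.le (by ring)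
    rw [← hcomb] at hgm
    have h2 := (Real.log_le_log_iff (by positivity) hc0).2 hgm
    rwa [Real.log_mul (by positivity) (by positivity), Real.log_rpow ht0,
      Real.log_rpow hτ0] at h2
  have hg2 : (2*c^2 - 2*c*c) = l * (2*c^2 - 2*c*t) + (1 - l) * (2*c^2 - 2*c*τstar) := by
    linear_combination (-2*c) * hcomb
  have hg3 := hconc (t - 2*c) (τstar - 2*c) l hl0.le hl1.le
  rw [show l * (t - 2*c) + (1 - l) * (τstar - 2*c) = c - 2*c by linear_combination -hcomb]
    at hg3
  have hkeylog : Real.log (c ^ 2 * gg c c) ≤ Real.log (τstar ^ 2 * gg c τstar) :=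
    (Real.log_le_log_iff hHc hHτ).2 hkey
  have main : Real.log (t ^ 2 * gg c t) ≤ Real.log (c ^ 2 * gg c c) := by
    rw [logH t ht0, logH c hc0]
    rw [logH c hc0, logH τstar hτ0] at hkeylog
    have hmul := mul_le_mul_of_nonneg_left hkeylog (by linarith : (0:ℝ) ≤ 1 - l)
    have hsum : l * (2 * Real.log t + (2*c^2 - 2*c*t) + Real.log (w c (t - 2*c)))
        ≤ l * (2 * Real.log c + (2*c^2 - 2*c*c) + Real.log (w c (c - 2*c))) := by
      nlinarith [hg1, hg2, hg3, hmul]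
    have := le_of_mul_le_mul_left hsum hl0
    linarith
  exact (Real.log_le_log_iff hHt hHc).1 main
end Aux

/-- For 0 < c < τ*, the worst-case mean square regret of δ*(y) = exp(2cy)/(exp(2cy)+1)
over [−c,c] equals c²ρ(c). -/
theorem stmt_3 (τstar c : ℝ) (hτ0 : 0 ≤ τstar)
    (hτmax : ∀ τ : ℝ, 0 ≤ τ → τ ^ 2 * ρ τ ≤ τstar ^ 2 * ρ τstar)
    (hc0 : 0 < c) (hc : c < τstar)
    (δstar : ℝ → ℝ)
    (hδstar : ∀ y, δstar y = Real.exp (2 * c * y) / (Real.exp (2 * c * y) + 1)) :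
    (⨆ τ : Set.Icc (-c) c, R δstar τ) = c ^ 2 * ρ c := by
  have hRle : ∀ τ : ℝ, τ ∈ Set.Icc (-c) c → R δstar τ ≤ c ^ 2 * ρ c := by
    intro τ hτ
    rw [Aux.R_eq c δstar hδstar τ]
    have habs : |τ| ≤ c := abs_le.2 ⟨hτ.1, hτ.2⟩
    have hMgg : c ^ 2 * ρ c = c ^ 2 * Aux.gg c c := by rw [Aux.rho_eq]
    rw [hMgg, ← sq_abs τ]
    rcases eq_or_lt_of_le habs with heq | hlt
    · rw [heq]
    · rcases eq_or_lt_of_le (abs_nonneg τ) with h0 | h0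
      · have hpos := mul_pos (pow_pos hc0 2) (Aux.gg_pos c c)
        rw [← h0]
        simpa using hpos.le
      · have hkey : c ^ 2 * Aux.gg c c ≤ τstar ^ 2 * Aux.gg c τstar := by
          calc c ^ 2 * Aux.gg c c = c ^ 2 * ρ c := by rw [Aux.rho_eq]
            _ ≤ τstar ^ 2 * ρ τstar := hτmax c hc0.le
            _ ≤ τstar ^ 2 * Aux.gg c τstar :=
                mul_le_mul_of_nonneg_left (Aux.rho_le_gg c τstar) (sq_nonneg τstar)
        exact Aux.H_le c τstar hc0 hc hkey |τ| h0 hlt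
  have hRc : R δstar c = c ^ 2 * ρ c := by
    rw [Aux.R_eq c δstar hδstar c, abs_of_pos hc0, Aux.rho_eq]
  haveI : Nonempty (Set.Icc (-c) c) := ⟨⟨c, by constructor <;> linarith⟩⟩
  apply le_antisymm
  · exact ciSup_le (fun τ => hRle τ τ.2)
  · have hb : BddAbove (Set.range (fun τ : Set.Icc (-c) c => R δstar τ)) := by
      refine ⟨c ^ 2 * ρ c, ?_⟩
      rintro x ⟨τ, rfl⟩
      exact hRle τ τ.2
    have hle := le_ciSup hb (⟨c, by constructor <;> linarith⟩ : Set.Icc (-c) c)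
    rwa [hRc] at hle
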